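/- Let λ be the fair-coin measure on Cantor space, let σ be a string, let n ∈ ℕ, and let 𝒜 ⊆ 2^ω be a measurable set with λ(𝒜 | σ) ≥ 2^{-n}. Then there exist two distinct strings τ₁ and τ₂, each extending σ and each of length |σ| + n + 1, such that λ(𝒜 | τ₁) ≥ 2^{-(n+1)} and λ(𝒜 | τ₂) ≥ 2^{-(n+1)}. -/

import Mathlib

open MeasureTheory
open scoped ENNReal

/-- `σ` is an initial segment of the infinite binary sequence `X`. -/
def PrefixOf (σ : List Bool) (X : ℕ → Bool) : Prop :=
  σ = (List.range σ.length).map X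

/-- The cylinder `[σ]` of all infinite binary sequences extending the string `σ`. -/
def cyl (σ : List Bool) : Set (ℕ → Bool) := {X | PrefixOf σ X}

lemma prefixOf_append_singleton (σ : List Bool) (b : Bool) (X : ℕ → Bool) :
    PrefixOf (σ ++ [b]) X ↔ PrefixOf σ X ∧ b = X σ.length := by
  unfold PrefixOf
  rw [List.length_append, List.length_singleton, List.range_succ, List.map_append,
    List.map_singleton]
  constructor
  · intro h
    have hlen : σ.length = ((List.range σ.length).map X).length := by simp
    obtain ⟨h1, h2⟩ := List.append_inj h hlen
    exact ⟨h1, by simpa using h2⟩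
  · rintro ⟨h1, h2⟩
    rw [← h1, ← h2]

lemma cyl_subset_union (σ : List Bool) :
    cyl σ ⊆ cyl (σ ++ [false]) ∪ cyl (σ ++ [true]) := by
  intro X hX
  cases hb : X σ.length
  · left; exact (prefixOf_append_singleton σ false X).2 ⟨hX, hb.symm⟩
  · right; exact (prefixOf_append_singleton σ true X).2 ⟨hX, hb.symm⟩

lemma inv_two_pow_ne_top (k : ℕ) : ((2 : ℝ≥0∞)⁻¹ ^ k) ≠ ∞ := by
  exact ENNReal.pow_ne_top (by simp)

lemma inv_two_pow_ne_zero (k : ℕ) : ((2 : ℝ≥0∞)⁻¹ ^ k) ≠ 0 := by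
  exact pow_ne_zero _ (ENNReal.inv_ne_zero.mpr (by norm_num))

lemma child (μ : Measure (ℕ → Bool))
    (hμ : ∀ σ : List Bool, μ (cyl σ) = (2 : ℝ≥0∞)⁻¹ ^ σ.length)
    (A : Set (ℕ → Bool)) (t : ℝ≥0∞) (ht : t ≠ ∞) (σ : List Bool)
    (h : t * μ (cyl σ) ≤ μ (A ∩ cyl σ)) :
    ∃ b, t * μ (cyl (σ ++ [b])) ≤ μ (A ∩ cyl (σ ++ [b])) := by
  by_contra hc
  push_neg at hc
  have h0 := hc false
  have h1 := hc true
  have hsub : A ∩ cyl σ ⊆ (A ∩ cyl (σ ++ [false])) ∪ (A ∩ cyl (σ ++ [true])) := by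
    rintro X ⟨hXA, hXc⟩
    rcases cyl_subset_union σ hXc with h' | h'
    · exact Or.inl ⟨hXA, h'⟩
    · exact Or.inr ⟨hXA, h'⟩
  have hle : μ (A ∩ cyl σ) ≤ μ (A ∩ cyl (σ ++ [false])) + μ (A ∩ cyl (σ ++ [true])) :=
    le_trans (measure_mono hsub) (measure_union_le _ _)
  have hlt : μ (A ∩ cyl (σ ++ [false])) + μ (A ∩ cyl (σ ++ [true])) <
      t * μ (cyl (σ ++ [false])) + t * μ (cyl (σ ++ [true])) :=
    ENNReal.add_lt_add h0 h1
  have hval : t * μ (cyl (σ ++ [false])) + t * μ (cyl (σ ++ [true])) = t * μ (cyl σ) := by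
    rw [hμ, hμ, hμ]
    simp only [List.length_append, List.length_singleton]
    rw [← mul_add, pow_succ]
    congr 1
    rw [← mul_add]
    have : (2 : ℝ≥0∞)⁻¹ + 2⁻¹ = 1 := by
      rw [← two_mul]
      exact ENNReal.mul_inv_cancel (by norm_num) (by norm_num)
    rw [this, mul_one]
  exact absurd (le_trans h hle) (not_le.mpr (hval ▸ hlt))

lemma iterate (μ : Measure (ℕ → Bool))
    (hμ : ∀ σ : List Bool, μ (cyl σ) = (2 : ℝ≥0∞)⁻¹ ^ σ.length)
    (A : Set (ℕ → Bool)) (t : ℝ≥0∞) (ht : t ≠ ∞) (σ : List Bool) (k : ℕ)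
    (h : t * μ (cyl σ) ≤ μ (A ∩ cyl σ)) :
    ∃ τ : List Bool, σ <+: τ ∧ τ.length = σ.length + k ∧
      t * μ (cyl τ) ≤ μ (A ∩ cyl τ) := by
  induction k with
  | zero => exact ⟨σ, List.prefix_refl σ, rfl, h⟩
  | succ k ih =>
    obtain ⟨τ, hpre, hlen, hτ⟩ := ih
    obtain ⟨b, hb⟩ := child μ hμ A t ht τ hτ
    exact ⟨τ ++ [b], hpre.trans (List.prefix_append τ [b]),
      by simp [hlen, Nat.add_assoc], hb⟩

/-- If `λ(𝒜 | σ) ≥ 2^{-n}` then there are two distinct extensions `τ₁, τ₂` of `σ` of length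
`|σ| + n + 1` with `λ(𝒜 | τᵢ) ≥ 2^{-(n+1)}`.  Here `μ` is the fair-coin measure on Cantor
space, characterized by its values `μ [σ] = 2^{-|σ|}` on cylinders. -/
theorem stmt0 (μ : Measure (ℕ → Bool))
    (hμ : ∀ σ : List Bool, μ (cyl σ) = (2 : ℝ≥0∞)⁻¹ ^ σ.length)
    (σ : List Bool) (n : ℕ) (A : Set (ℕ → Bool)) (hA : MeasurableSet A)
    (h : (2 : ℝ≥0∞)⁻¹ ^ n ≤ μ (A ∩ cyl σ) / μ (cyl σ)) :
    ∃ τ₁ τ₂ : List Bool, τ₁ ≠ τ₂ ∧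
      σ <+: τ₁ ∧ σ <+: τ₂ ∧
      τ₁.length = σ.length + n + 1 ∧ τ₂.length = σ.length + n + 1 ∧
      (2 : ℝ≥0∞)⁻¹ ^ (n + 1) ≤ μ (A ∩ cyl τ₁) / μ (cyl τ₁) ∧
      (2 : ℝ≥0∞)⁻¹ ^ (n + 1) ≤ μ (A ∩ cyl τ₂) / μ (cyl τ₂) := by
  -- convert the hypothesis to multiplicative form
  have hdiv : ∀ (B : Set (ℕ → Bool)) (ρ : List Bool) (t : ℝ≥0∞),
      t * μ (cyl ρ) ≤ μ (B ∩ cyl ρ) ↔ t ≤ μ (B ∩ cyl ρ) / μ (cyl ρ) := by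
    intro B ρ t
    rw [ENNReal.le_div_iff_mul_le (Or.inl (by rw [hμ]; exact inv_two_pow_ne_zero _))
      (Or.inl (by rw [hμ]; exact inv_two_pow_ne_top _))]
  have h' : (2 : ℝ≥0∞)⁻¹ ^ n * μ (cyl σ) ≤ μ (A ∩ cyl σ) := (hdiv A σ _).mpr h
  -- first witness
  obtain ⟨τ₁, hpre₁, hlen₁, hτ₁⟩ :=
    iterate μ hμ A _ (inv_two_pow_ne_top n) σ (n + 1) h'
  -- the remainder set
  set A' := A \ cyl τ₁ with hA'
  have hkey : (2 : ℝ≥0∞)⁻¹ ^ (n + 1) * μ (cyl σ) ≤ μ (A' ∩ cyl σ) := by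
    have hsub : A ∩ cyl σ ⊆ (A' ∩ cyl σ) ∪ cyl τ₁ := by
      rintro X ⟨hXA, hXc⟩
      by_cases hX : X ∈ cyl τ₁
      · exact Or.inr hX
      · exact Or.inl ⟨⟨hXA, hX⟩, hXc⟩
    have h1 : μ (A ∩ cyl σ) ≤ μ (A' ∩ cyl σ) + μ (cyl τ₁) :=
      le_trans (measure_mono hsub) (measure_union_le _ _)
    have h2 : (2 : ℝ≥0∞)⁻¹ ^ (n + 1) * μ (cyl σ) + μ (cyl τ₁) ≤
        μ (A' ∩ cyl σ) + μ (cyl τ₁) := by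
      refine le_trans ?_ (le_trans h' h1)
      rw [hμ, hμ, hlen₁]
      have : (2 : ℝ≥0∞)⁻¹ ^ (n + 1) * 2⁻¹ ^ σ.length + 2⁻¹ ^ (σ.length + (n + 1)) =
          2⁻¹ ^ n * 2⁻¹ ^ σ.length := by
        rw [← pow_add, show σ.length + (n + 1) = n + 1 + σ.length from by omega, ← pow_add,
          ← two_mul, show n + 1 + σ.length = (n + σ.length) + 1 from by omega, pow_succ,
          mul_comm (2 : ℝ≥0∞), mul_assoc,
          ENNReal.inv_mul_cancel (by norm_num) (by norm_num), mul_one, pow_add]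
      rw [this]
    exact (ENNReal.add_le_add_iff_right (by rw [hμ]; exact inv_two_pow_ne_top _)).mp h2
  obtain ⟨τ₂, hpre₂, hlen₂, hτ₂⟩ :=
    iterate μ hμ A' _ (inv_two_pow_ne_top (n + 1)) σ (n + 1) hkey
  have hne : τ₁ ≠ τ₂ := by
    intro heq
    have hempty : A' ∩ cyl τ₂ = ∅ := by
      rw [← heq]
      ext X
      simp only [hA', Set.mem_inter_iff, Set.mem_diff, Set.mem_empty_iff_false, iff_false]
      tauto
    rw [hempty, measure_empty, nonpos_iff_eq_zero, mul_eq_zero] at hτ₂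
    rcases hτ₂ with h0 | h0
    · exact inv_two_pow_ne_zero _ h0
    · rw [hμ] at h0; exact inv_two_pow_ne_zero _ h0
  refine ⟨τ₁, τ₂, hne, hpre₁, hpre₂, by omega, by omega, ?_, ?_⟩
  · exact (hdiv A τ₁ _).mp (le_trans (mul_le_mul_left (by
      exact pow_le_pow_of_le_one zero_le (by simp) (by omega)) _) hτ₁)
  · exact (hdiv A τ₂ _).mp (le_trans hτ₂ (measure_mono (Set.inter_subset_inter_left _
      Set.diff_subset)))
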